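/- For positive integers a and b, the circular fence poset F̄((a,b)) has exactly ab+2 lower ideals, and its rank polynomial is R̄((a,b);q) = 1 + q·[a]_q·[b]_q + q^{a+b}, where [k]_q = 1+q+⋯+q^{k−1}. -/

import Mathlib

attribute [local instance] Classical.propDecidable

noncomputable section

/-- `α` is a composition: a nonempty list of positive integers. -/
def IsComposition (α : List ℕ) : Prop := α ≠ [] ∧ ∀ p ∈ α, 0 < p

/-- The 0-based index of the segment of the composition `α` containing edge `e`,
where edge `e` joins nodes `e` and `e+1` (nodes are 0-indexed, so node `i`
is the element `x_{i+1}` of the fence). -/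
def segIdx (α : List ℕ) (e : ℕ) : ℕ :=
  ((List.range α.length).filter fun j => decide ((α.take (j + 1)).sum ≤ e)).length

/-- Edge `e` of the fence of `α` points upwards (node `e` ⪯ node `e+1`):
edges in odd (1-based) segments point up, edges in even segments point down. -/
def upEdge (α : List ℕ) (e : ℕ) : Prop := Even (segIdx α e)

/-- The defining relations of the fence poset `F(α)` on `Fin (α.sum + 1)`:
`fenceStep α x y` holds iff `x ⪯ y` is one of the generating (cover) relations. -/
def fenceStep (α : List ℕ) (x y : Fin (α.sum + 1)) : Prop :=
  (y.val = x.val + 1 ∧ upEdge α x.val) ∨ (x.val = y.val + 1 ∧ ¬ upEdge α y.val)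

/-- The order of the fence poset `F(α)`, i.e. the partial order generated by
the defining relations. -/
def fenceLE (α : List ℕ) : Fin (α.sum + 1) → Fin (α.sum + 1) → Prop :=
  Relation.ReflTransGen (fenceStep α)

/-- Lower (order) ideals of the fence poset `F(α)`. -/
def IsFenceIdeal (α : List ℕ) (I : Finset (Fin (α.sum + 1))) : Prop :=
  ∀ x y, fenceLE α x y → y ∈ I → x ∈ I

/-- `fenceRank α k` is the number of lower ideals of `F(α)` of size `k`;
the rank sequence of `F(α)` is `fenceRank α 0, …, fenceRank α (α.sum + 1)`. -/
def fenceRank (α : List ℕ) (k : ℕ) : ℕ :=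
  Nat.card {I : Finset (Fin (α.sum + 1)) // IsFenceIdeal α I ∧ I.card = k}

/-- Defining relations of the circular fence poset `F̄(α)` on `Fin α.sum`:
as for the fence, but node `α.sum` (that is, `x_{n+1}`) is identified with node `0`. -/
def cStep (α : List ℕ) (x y : Fin α.sum) : Prop :=
  (y.val = (x.val + 1) % α.sum ∧ upEdge α x.val) ∨
  (x.val = (y.val + 1) % α.sum ∧ ¬ upEdge α y.val)

/-- The order of the circular fence poset `F̄(α)`. -/
def cLE (α : List ℕ) : Fin α.sum → Fin α.sum → Prop :=
  Relation.ReflTransGen (cStep α)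

/-- Lower (order) ideals of the circular fence poset `F̄(α)`. -/
def IsCIdeal (α : List ℕ) (I : Finset (Fin α.sum)) : Prop :=
  ∀ x y, cLE α x y → y ∈ I → x ∈ I

/-- `cRank α k` is the number of lower ideals of `F̄(α)` of size `k`;
the rank sequence of `F̄(α)` is `cRank α 0, …, cRank α α.sum`. -/
def cRank (α : List ℕ) (k : ℕ) : ℕ :=
  Nat.card {I : Finset (Fin α.sum) // IsCIdeal α I ∧ I.card = k}

/-- The sequence `a 0, …, a m` is unimodal. -/
def Unimodal (a : ℕ → ℕ) (m : ℕ) : Prop :=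
  ∃ j ≤ m, (∀ i < j, a i ≤ a (i + 1)) ∧ ∀ i, j ≤ i → i < m → a (i + 1) ≤ a i

/-- The sequence `a 0, …, a m` is bottom interlacing:
`a m ≤ a 0 ≤ a (m-1) ≤ a 1 ≤ ⋯ ≤ a ⌊m/2⌋`. -/
def BottomInterlacing (a : ℕ → ℕ) (m : ℕ) : Prop :=
  (∀ i, 2 * i ≤ m → a (m - i) ≤ a i) ∧ ∀ i, 2 * i + 1 < m → a i ≤ a (m - 1 - i)

/-- The sequence `a 0, …, a m` is top interlacing:
`a 0 ≤ a m ≤ a 1 ≤ a (m-1) ≤ ⋯ ≤ a ⌈m/2⌉`. -/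
def TopInterlacing (a : ℕ → ℕ) (m : ℕ) : Prop :=
  (∀ i, 2 * i ≤ m → a i ≤ a (m - i)) ∧ ∀ i, 2 * i + 1 < m → a (m - i) ≤ a (i + 1)

/-- The sequence `a 0, …, a m` is symmetric. -/
def SymmetricSeq (a : ℕ → ℕ) (m : ℕ) : Prop := ∀ k ≤ m, a k = a (m - k)

/-- Rowmotion for the order relation `r` on `Fin m`: `rhoRel r I` is the lower
ideal generated by the minimal elements of the complement of `I`. -/
def rhoRel {m : ℕ} (r : Fin m → Fin m → Prop) (I : Finset (Fin m)) : Finset (Fin m) :=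
  Finset.univ.filter fun x => ∃ y, y ∉ I ∧ (∀ z, r z y → z ≠ y → z ∈ I) ∧ r x y

/-- The (forward) orbit of `I` under a rowmotion map `ρ`. -/
def orbitOf {m : ℕ} (ρ : Finset (Fin m) → Finset (Fin m)) (I : Finset (Fin m)) :
    Finset (Finset (Fin m)) :=
  Finset.univ.filter fun J => ∃ k, ρ^[k] I = J

/-- The number of maximal elements of `I` viewed as a subposet of the order
with relation `r`. -/
def maxCount {m : ℕ} (r : Fin m → Fin m → Prop) (I : Finset (Fin m)) : ℕ :=
  (I.filter fun x => ∀ y ∈ I, r x y → y = x).card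

end

lemma upEdge_iff (a b : ℕ) {e : ℕ} (he : e < a + b) : upEdge [a, b] e ↔ e < a := by
  have h2 : List.range 2 = [0, 1] := rfl
  by_cases h : a ≤ e
  · simp only [upEdge, segIdx, h2, List.filter, List.take, List.sum_cons, List.sum_nil]
    simp [List.range_succ, h, decide_eq_false (show ¬ (a + b ≤ e) by omega), Nat.even_add_one]
  · simp only [upEdge, segIdx, h2, List.filter, List.take, List.sum_cons, List.sum_nil]
    simp [List.range_succ, h, decide_eq_false (show ¬ (a + b ≤ e) by omega)]
    omega
noncomputable section Aux
open Finset

lemma flt {a b k : ℕ} (h : k < a + b) : k < ([a,b] : List ℕ).sum := h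

lemma cStep_iff (a b : ℕ) (x y : Fin ([a,b].sum)) :
    cStep [a,b] x y ↔
      (y.val = (x.val + 1) % (a + b) ∧ x.val < a) ∨
      (x.val = (y.val + 1) % (a + b) ∧ a ≤ y.val) := by
  have hx : x.val < a + b := x.isLt
  have hy : y.val < a + b := y.isLt
  unfold cStep
  rw [upEdge_iff a b hx, upEdge_iff a b hy, Nat.not_lt]
  exact Iff.rfl

lemma isCIdeal_iff_step (a b : ℕ) (I : Finset (Fin ([a,b].sum))) :
    IsCIdeal [a,b] I ↔ ∀ x y, cStep [a,b] x y → y ∈ I → x ∈ I := by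
  constructor
  · exact fun h x y hs => h x y (Relation.ReflTransGen.single hs)
  · intro h x y hxy
    induction hxy with
    | refl => exact id
    | tail hs hstep ih => exact fun hyI => ih (h _ _ hstep hyI)

def goodI (a b i j : ℕ) : Finset (Fin ([a,b].sum)) :=
  Finset.univ.filter fun x => x.val ≤ i ∨ a + b - j ≤ x.val

lemma mem_goodI {a b i j : ℕ} {x : Fin ([a,b].sum)} :
    x ∈ goodI a b i j ↔ x.val ≤ i ∨ a + b - j ≤ x.val := by
  simp only [goodI, Finset.mem_filter, Finset.mem_univ, true_and]

lemma ideal_char {a b : ℕ} (ha : 0 < a) (hb : 0 < b) (I : Finset (Fin ([a,b].sum))) :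
    IsCIdeal [a,b] I ↔
      I = ∅ ∨ I = Finset.univ ∨ ∃ i < a, ∃ j < b, I = goodI a b i j := by
  have hn : 0 < a + b := by omega
  constructor
  · intro hI
    have step := (isCIdeal_iff_step a b I).1 hI
    have hA : ∀ (k : ℕ) (hk : k + 1 < a + b), k < a →
        (⟨k+1, hk⟩ : Fin ([a,b].sum)) ∈ I → (⟨k, flt (by omega)⟩ : Fin ([a,b].sum)) ∈ I := by
      intro k hk hka h
      refine step _ _ ((cStep_iff a b _ _).2 ?_) h
      exact Or.inl ⟨(Nat.mod_eq_of_lt hk).symm, hka⟩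
    have hB : ∀ (k : ℕ) (hk : k + 1 < a + b), a ≤ k →
        (⟨k, flt (by omega)⟩ : Fin ([a,b].sum)) ∈ I → (⟨k+1, hk⟩ : Fin ([a,b].sum)) ∈ I := by
      intro k hk hka h
      refine step _ _ ((cStep_iff a b _ _).2 ?_) h
      exact Or.inr ⟨(Nat.mod_eq_of_lt hk).symm, hka⟩
    have hC : (⟨a+b-1, flt (by omega)⟩ : Fin ([a,b].sum)) ∈ I →
        (⟨0, hn⟩ : Fin ([a,b].sum)) ∈ I := by
      intro h
      refine step _ _ ((cStep_iff a b _ _).2 ?_) h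
      refine Or.inr ⟨?_, show a ≤ a + b - 1 by omega⟩
      show (0 : ℕ) = (a + b - 1 + 1) % (a + b)
      rw [show a + b - 1 + 1 = a + b by omega, Nat.mod_self]
    have hAc : ∀ (m : ℕ) (hm : m < a + b), m ≤ a →
        (⟨m, hm⟩ : Fin ([a,b].sum)) ∈ I →
        ∀ k ≤ m, ∀ (hk : k < a + b), (⟨k, hk⟩ : Fin ([a,b].sum)) ∈ I := by
      intro m
      induction m with
      | zero =>
        intro hm _ h0 k hk hk2
        have : k = 0 := by omega
        subst this; exact h0
      | succ m ih =>
        intro hm hma hmem k hk hk2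
        by_cases hkm : k = m + 1
        · subst hkm; exact hmem
        · have hmI : (⟨m, flt (by omega)⟩ : Fin ([a,b].sum)) ∈ I := hA m hm (by omega) hmem
          exact ih (by omega) (by omega) hmI k (by omega) hk2
    have hBc : ∀ (m : ℕ) (hm : m < a + b), a ≤ m →
        (⟨m, hm⟩ : Fin ([a,b].sum)) ∈ I →
        ∀ k, m ≤ k → ∀ (hk : k < a + b), (⟨k, hk⟩ : Fin ([a,b].sum)) ∈ I := by
      intro m hm hma hmem k
      induction k with
      | zero =>
        intro hmk hk
        have : m = 0 := by omega
        subst this; exact hmem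
      | succ k ih =>
        intro hmk hk
        by_cases h : m = k + 1
        · subst h; exact hmem
        · exact hB k hk (by omega) (ih (by omega) (by omega))
    by_cases hain : (⟨a, flt (by omega)⟩ : Fin ([a,b].sum)) ∈ I
    · refine Or.inr (Or.inl (Finset.eq_univ_iff_forall.2 fun x => ?_))
      rcases le_or_gt x.val a with h | h
      · exact hAc a (by omega) le_rfl hain x.val h x.isLt
      · exact hBc a (by omega) le_rfl hain x.val (by omega) x.isLt
    · by_cases hne : I = ∅
      · exact Or.inl hne
      refine Or.inr (Or.inr ?_)
      obtain ⟨x0, hx0⟩ := Finset.nonempty_iff_ne_empty.2 hne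
      have hx0lt : x0.val < a + b := x0.isLt
      have h0 : (⟨0, hn⟩ : Fin ([a,b].sum)) ∈ I := by
        rcases lt_trichotomy x0.val a with h | h | h
        · exact hAc x0.val x0.isLt (le_of_lt h) hx0 0 (by omega) hn
        · exact absurd hx0 (by
            have : x0 = (⟨a, flt (by omega)⟩ : Fin ([a,b].sum)) := Fin.ext h
            rw [this]; exact hain)
        · exact hC (hBc x0.val x0.isLt (by omega) hx0 (a+b-1) (by omega) (by omega))
      -- left chain
      set L := (I.filter fun x => x.val < a).image Fin.val with hLdef
      have hLne : L.Nonempty :=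
        ⟨0, Finset.mem_image.2 ⟨⟨0, hn⟩, Finset.mem_filter.2 ⟨h0, ha⟩, rfl⟩⟩
      set i := L.max' hLne with hidef
      obtain ⟨xi, hxi, hxival⟩ := Finset.mem_image.1 (L.max'_mem hLne)
      rw [Finset.mem_filter] at hxi
      have hia : i < a := by have h' := hxi.2; rw [hxival] at h'; exact h'
      have hiI : (⟨i, flt (by omega)⟩ : Fin ([a,b].sum)) ∈ I := by
        have : xi = (⟨i, flt (by omega)⟩ : Fin ([a,b].sum)) := Fin.ext hxival
        rw [← this]; exact hxi.1
      have hile : ∀ (k : ℕ) (hk : k < a + b), k < a →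
          (⟨k, hk⟩ : Fin ([a,b].sum)) ∈ I → k ≤ i :=
        fun k hk hka hkI => L.le_max' k (Finset.mem_image.2
          ⟨⟨k, hk⟩, Finset.mem_filter.2 ⟨hkI, hka⟩, rfl⟩)
      -- right chain
      set R := (I.filter fun x => a < x.val).image Fin.val with hRdef
      by_cases hR : R.Nonempty
      · set m := R.min' hR with hmdef
        obtain ⟨xm, hxm, hxmval⟩ := Finset.mem_image.1 (R.min'_mem hR)
        rw [Finset.mem_filter] at hxm
        have ham : a < m := by have h' := hxm.2; rw [hxmval] at h'; exact h'
        have hmn : m < a + b := by have h' : (xm : ℕ) < a + b := xm.isLt; rw [hxmval] at h'; exact h'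
        have hmI : (⟨m, hmn⟩ : Fin ([a,b].sum)) ∈ I := by
          have : xm = (⟨m, hmn⟩ : Fin ([a,b].sum)) := Fin.ext hxmval
          rw [← this]; exact hxm.1
        have hmle : ∀ (k : ℕ) (hk : k < a + b), a < k →
            (⟨k, hk⟩ : Fin ([a,b].sum)) ∈ I → m ≤ k :=
          fun k hk hka hkI => R.min'_le k (Finset.mem_image.2
            ⟨⟨k, hk⟩, Finset.mem_filter.2 ⟨hkI, hka⟩, rfl⟩)
        refine ⟨i, hia, a + b - m, by omega, ?_⟩
        ext x
        rw [mem_goodI]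
        have hxlt : x.val < a + b := x.isLt
        constructor
        · intro hx
          rcases lt_trichotomy x.val a with h | h | h
          · exact Or.inl (hile x.val x.isLt h hx)
          · exact absurd hx (by
              have : x = (⟨a, flt (by omega)⟩ : Fin ([a,b].sum)) := Fin.ext h
              rw [this]; exact hain)
          · have := hmle x.val x.isLt h hx
            right; omega
        · rintro (h | h)
          · exact hAc i (by omega) (by omega) hiI x.val h x.isLt
          · exact hBc m hmn (by omega) hmI x.val (by omega) x.isLt
      · refine ⟨i, hia, 0, hb, ?_⟩
        ext x
        rw [mem_goodI]
        have hxlt : x.val < a + b := x.isLt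
        constructor
        · intro hx
          rcases lt_trichotomy x.val a with h | h | h
          · exact Or.inl (hile x.val x.isLt h hx)
          · exact absurd hx (by
              have : x = (⟨a, flt (by omega)⟩ : Fin ([a,b].sum)) := Fin.ext h
              rw [this]; exact hain)
          · exact absurd ⟨x.val, Finset.mem_image.2 ⟨x, Finset.mem_filter.2 ⟨hx, h⟩, rfl⟩⟩ hR
        · rintro (h | h)
          · exact hAc i (by omega) (by omega) hiI x.val h x.isLt
          · omega
  · rintro (rfl | rfl | ⟨i, hia, j, hjb, rfl⟩)
    · intro x y _ h; exact absurd h (Finset.notMem_empty _)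
    · intro x y _ _; exact Finset.mem_univ x
    · rw [isCIdeal_iff_step]
      intro x y hs hy
      rw [cStep_iff] at hs
      rw [mem_goodI] at hy ⊢
      have hxlt : x.val < a + b := x.isLt
      have hylt : y.val < a + b := y.isLt
      rcases hs with ⟨h1, h2⟩ | ⟨h1, h2⟩
      · rw [Nat.mod_eq_of_lt (by omega)] at h1
        omega
      · by_cases hy1 : y.val + 1 = a + b
        · have hx0 : x.val = 0 := by rw [h1, hy1, Nat.mod_self]
          left; omega
        · rw [Nat.mod_eq_of_lt (by omega)] at h1
          omega

end Aux
noncomputable section Aux2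
open Finset

lemma goodI_eq_attachFin {a b i j : ℕ} (hia : i < a) (hjb : j < b) :
    goodI a b i j = (Finset.range (i+1) ∪ Finset.Ico (a+b-j) (a+b)).attachFin
      (fun m hm => by
        simp only [Finset.mem_union, Finset.mem_range, Finset.mem_Ico] at hm
        exact flt (by omega)) := by
  ext x
  have hx : x.val < a + b := x.isLt
  rw [mem_goodI, Finset.mem_attachFin]
  simp only [Finset.mem_union, Finset.mem_range, Finset.mem_Ico]
  omega

lemma card_goodI {a b i j : ℕ} (hia : i < a) (hjb : j < b) :
    (goodI a b i j).card = i + 1 + j := by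
  rw [goodI_eq_attachFin hia hjb, Finset.card_attachFin,
    Finset.card_union_of_disjoint, Finset.card_range, Nat.card_Ico]
  · omega
  · rw [Finset.disjoint_left]
    intro k hk hk'
    simp only [Finset.mem_range] at hk
    simp only [Finset.mem_Ico] at hk'
    omega

lemma zero_mem_goodI {a b i j : ℕ} (hab : 0 < a + b) :
    (⟨0, flt hab⟩ : Fin ([a,b].sum)) ∈ goodI a b i j := by
  rw [mem_goodI]; left; exact Nat.zero_le i

lemma a_not_mem_goodI {a b i j : ℕ} (hb : 0 < b) (hia : i < a) (hjb : j < b) :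
    (⟨a, flt (by omega)⟩ : Fin ([a,b].sum)) ∉ goodI a b i j := by
  rw [mem_goodI]
  show ¬(a ≤ i ∨ a + b - j ≤ a)
  push_neg
  constructor <;> omega

lemma goodI_inj {a b i j i' j' : ℕ} (h1 : i < a) (h2 : j < b) (h1' : i' < a) (h2' : j' < b)
    (h : goodI a b i j = goodI a b i' j') : i = i' ∧ j = j' := by
  have key : ∀ (k : ℕ) (hk : k < a + b),
      ((k ≤ i ∨ a + b - j ≤ k) ↔ (k ≤ i' ∨ a + b - j' ≤ k)) := by
    intro k hk
    have := Finset.ext_iff.1 h ⟨k, flt hk⟩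
    rw [mem_goodI, mem_goodI] at this
    exact this
  have hi := key i (by omega)
  have hi' := key i' (by omega)
  refine ⟨by omega, ?_⟩
  rcases Nat.eq_zero_or_pos j with rfl | hj0 <;> rcases Nat.eq_zero_or_pos j' with rfl | hj0'
  · rfl
  · have := key (a+b-j') (by omega); omega
  · have := key (a+b-j) (by omega); omega
  · have k1 := key (a+b-j) (by omega)
    have k2 := key (a+b-j') (by omega)
    omega

def idealSet (a b : ℕ) : Finset (Finset (Fin ([a,b].sum))) :=
  insert ∅ (insert Finset.univ
    (((Finset.range a) ×ˢ (Finset.range b)).image fun p => goodI a b p.1 p.2))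

lemma mem_idealSet {a b : ℕ} (ha : 0 < a) (hb : 0 < b) (I : Finset (Fin ([a,b].sum))) :
    I ∈ idealSet a b ↔ IsCIdeal [a,b] I := by
  rw [ideal_char ha hb]
  simp only [idealSet, Finset.mem_insert, Finset.mem_image, Finset.mem_product,
    Finset.mem_range]
  constructor
  · rintro (rfl | rfl | ⟨⟨i, j⟩, ⟨hia, hjb⟩, rfl⟩)
    · exact Or.inl rfl
    · exact Or.inr (Or.inl rfl)
    · exact Or.inr (Or.inr ⟨i, hia, j, hjb, rfl⟩)
  · rintro (rfl | rfl | ⟨i, hia, j, hjb, rfl⟩)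
    · exact Or.inl rfl
    · exact Or.inr (Or.inl rfl)
    · exact Or.inr (Or.inr ⟨⟨i, j⟩, ⟨hia, hjb⟩, rfl⟩)

lemma empty_not_mem {a b : ℕ} (ha : 0 < a) (hb : 0 < b) :
    (∅ : Finset (Fin ([a,b].sum))) ∉ insert Finset.univ
      (((Finset.range a) ×ˢ (Finset.range b)).image fun p => goodI a b p.1 p.2) := by
  simp only [Finset.mem_insert, Finset.mem_image, Finset.mem_product, Finset.mem_range]
  push_neg
  constructor
  · intro h
    have : (⟨0, flt (by omega)⟩ : Fin ([a,b].sum)) ∈ (Finset.univ : Finset (Fin ([a,b].sum))) :=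
      Finset.mem_univ _
    rw [← h] at this
    exact absurd this (Finset.notMem_empty _)
  · rintro ⟨i, j⟩ ⟨hia, hjb⟩
    exact ⟨_, zero_mem_goodI (a := a) (b := b) (i := i) (j := j) (by omega)⟩

lemma univ_not_mem {a b : ℕ} (ha : 0 < a) (hb : 0 < b) :
    (Finset.univ : Finset (Fin ([a,b].sum))) ∉
      ((Finset.range a) ×ˢ (Finset.range b)).image fun p => goodI a b p.1 p.2 := by
  simp only [Finset.mem_image, Finset.mem_product, Finset.mem_range]
  rintro ⟨⟨i, j⟩, ⟨hia, hjb⟩, h⟩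
  have := a_not_mem_goodI (a := a) (b := b) (i := i) (j := j) hb hia hjb
  rw [h] at this
  exact this (Finset.mem_univ _)

lemma injOn_goodI {a b : ℕ} :
    Set.InjOn (fun p : ℕ × ℕ => goodI a b p.1 p.2) (((Finset.range a) ×ˢ (Finset.range b) : Finset (ℕ × ℕ)) : Set (ℕ × ℕ)) := by
  rintro ⟨i, j⟩ hp ⟨i', j'⟩ hq h
  simp only [Finset.coe_product, Set.mem_prod, Finset.mem_coe, Finset.mem_range] at hp hq
  obtain ⟨h1, h2⟩ := goodI_inj hp.1 hp.2 hq.1 hq.2 h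
  simp [h1, h2]

lemma card_idealSet {a b : ℕ} (ha : 0 < a) (hb : 0 < b) :
    (idealSet a b).card = a * b + 2 := by
  rw [idealSet, Finset.card_insert_of_notMem (empty_not_mem ha hb),
    Finset.card_insert_of_notMem (univ_not_mem ha hb),
    Finset.card_image_of_injOn injOn_goodI, Finset.card_product,
    Finset.card_range, Finset.card_range]

end Aux2
noncomputable section Aux3
open Finset

lemma cRank_eq {a b : ℕ} (ha : 0 < a) (hb : 0 < b) (k : ℕ) :
    cRank [a,b] k = ((idealSet a b).filter fun I => I.card = k).card := by
  unfold cRank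
  have e : {I : Finset (Fin ([a,b].sum)) // IsCIdeal [a,b] I ∧ I.card = k} ≃
      {I : Finset (Fin ([a,b].sum)) // I ∈ (idealSet a b).filter fun I => I.card = k} :=
    Equiv.subtypeEquivRight fun I => by
      rw [Finset.mem_filter, mem_idealSet ha hb]
  rw [Nat.card_congr e, Nat.card_eq_fintype_card, Fintype.card_coe]

end Aux3

open Polynomial in
theorem circular_rank_two_parts (a b : ℕ) (ha : 0 < a) (hb : 0 < b) :
    Nat.card {I : Finset (Fin ([a, b].sum)) // IsCIdeal [a, b] I} = a * b + 2 ∧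
    (∑ k ∈ Finset.range (a + b + 1), (cRank [a, b] k : Polynomial ℕ) * X ^ k) =
      1 + X * (∑ i ∈ Finset.range a, (X : Polynomial ℕ) ^ i) *
          (∑ i ∈ Finset.range b, (X : Polynomial ℕ) ^ i) + X ^ (a + b) := by
  have hsum : ([a,b] : List ℕ).sum = a + b := rfl
  constructor
  · have e1 : {I : Finset (Fin ([a,b].sum)) // IsCIdeal [a,b] I} ≃
        {I : Finset (Fin ([a,b].sum)) // I ∈ idealSet a b} :=
      Equiv.subtypeEquivRight fun I => (mem_idealSet ha hb I).symm
    rw [Nat.card_congr e1, Nat.card_eq_fintype_card, Fintype.card_coe, card_idealSet ha hb]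
  · have hcu : (Finset.univ : Finset (Fin ([a,b].sum))).card = a + b := by
      rw [Finset.card_univ, Fintype.card_fin]; exact hsum
    have hmaps : ∀ I ∈ idealSet a b, I.card ∈ Finset.range (a + b + 1) := by
      intro I _
      rw [Finset.mem_range]
      have h1 := Finset.card_le_univ I
      rw [Fintype.card_fin] at h1
      have h2 : I.card ≤ a + b := h1
      omega
    have hswap : (∑ k ∈ Finset.range (a + b + 1), (cRank [a, b] k : Polynomial ℕ) * X ^ k)
        = ∑ I ∈ idealSet a b, (X : Polynomial ℕ) ^ I.card := by
      rw [← Finset.sum_fiberwise_of_maps_to hmaps (fun I => (X : Polynomial ℕ) ^ I.card)]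
      refine Finset.sum_congr rfl fun k _ => ?_
      rw [cRank_eq ha hb k,
        Finset.sum_congr rfl (fun I hI => by rw [(Finset.mem_filter.1 hI).2]),
        Finset.sum_const, nsmul_eq_mul]
    rw [hswap, idealSet, Finset.sum_insert (empty_not_mem ha hb),
      Finset.sum_insert (univ_not_mem ha hb),
      Finset.sum_image (fun p hp q hq h => injOn_goodI (Finset.mem_coe.2 hp) (Finset.mem_coe.2 hq) h)]
    rw [Finset.card_empty, pow_zero, hcu]
    have hterm : ∑ p ∈ Finset.range a ×ˢ Finset.range b, (X : Polynomial ℕ) ^ (goodI a b p.1 p.2).card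
        = ∑ p ∈ Finset.range a ×ˢ Finset.range b, (X : Polynomial ℕ) ^ (p.1 + 1 + p.2) := by
      refine Finset.sum_congr rfl fun p hp => ?_
      rw [Finset.mem_product, Finset.mem_range, Finset.mem_range] at hp
      rw [card_goodI hp.1 hp.2]
    rw [hterm]
    have hrhs : (X : Polynomial ℕ) * (∑ i ∈ Finset.range a, (X : Polynomial ℕ) ^ i) *
        (∑ i ∈ Finset.range b, (X : Polynomial ℕ) ^ i)
        = ∑ p ∈ Finset.range a ×ˢ Finset.range b, (X : Polynomial ℕ) ^ (p.1 + 1 + p.2) := by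
      rw [Finset.sum_product, mul_assoc, Finset.sum_mul_sum, Finset.mul_sum]
      refine Finset.sum_congr rfl fun i _ => ?_
      rw [Finset.mul_sum]
      refine Finset.sum_congr rfl fun j _ => ?_
      ring
    rw [hrhs]
    ring
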